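/- arXiv:2411.15391 — 9 statements merged into one kernel-verified Lean document; each statement's English description precedes it below -/
import Mathlib

section
/- Let r ≥ 1 and φ ∈ ℝ, and let A = (r·cos φ, r·sin φ) be the point with polar coordinates (r, φ). Then for every t ∈ ℝ with |t − φ| ≤ arccos(1/r), the point A inspects P_t, i.e., for all s ∈ [0,1], ‖(1−s)·A + s·P_t‖ ≥ 1. -/
open Real Set

/-- The point of the unit circle at angle `φ`. -/
noncomputable def Ppt (φ : ℝ) : EuclideanSpace ℝ (Fin 2) := !₂[Real.cos φ, Real.sin φ]

/-- `A` inspects the perimeter point `P_φ` if no convex combination of `A` and `P_φ`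
lies in the open unit disk. -/
def Inspects (A : EuclideanSpace ℝ (Fin 2)) (φ : ℝ) : Prop :=
  ∀ s ∈ Set.Icc (0:ℝ) 1, 1 ≤ ‖(1 - s) • A + s • Ppt φ‖

theorem point_at_polar_coordinates_inspects (r φ : ℝ) (hr : 1 ≤ r) (t : ℝ)
    (ht : |t - φ| ≤ Real.arccos (1 / r)) :
    Inspects (!₂[r * Real.cos φ, r * Real.sin φ] : EuclideanSpace ℝ (Fin 2)) t := by
  have hr0 : (0:ℝ) < r := lt_of_lt_of_le one_pos hr
  have h1r : 1 / r ≤ 1 := by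
    rw [div_le_one hr0]; exact hr
  have h1r' : -(1:ℝ) ≤ 1 / r := le_trans (by norm_num : (-1:ℝ) ≤ 0) (by positivity)
  -- cos (t - φ) ≥ 1 / r
  have hcos : 1 / r ≤ Real.cos (t - φ) := by
    have h1 : Real.cos |t - φ| = Real.cos (t - φ) := Real.cos_abs _
    rw [← h1, ← Real.cos_arccos h1r' h1r]
    exact Real.cos_le_cos_of_nonneg_of_le_pi (abs_nonneg _)
      (le_trans (Real.arccos_le_pi _) le_rfl) ht
  have hkey : 1 ≤ r * Real.cos (t - φ) := by
    have := mul_le_mul_of_nonneg_left hcos (le_of_lt hr0)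
    calc (1:ℝ) = r * (1 / r) := by field_simp
    _ ≤ r * Real.cos (t - φ) := this
  intro s hs
  obtain ⟨hs0, hs1⟩ := hs
  rw [EuclideanSpace.norm_eq, show (1:ℝ) ≤ Real.sqrt _ ↔ (1:ℝ)^2 ≤ _ from Real.le_sqrt zero_le_one (by positivity), one_pow]
  simp only [Fin.sum_univ_two, PiLp.add_apply, PiLp.smul_apply, smul_eq_mul, Ppt,
    Matrix.cons_val_zero, Matrix.cons_val_one, Matrix.head_cons, Real.norm_eq_abs, sq_abs]
  have hc : Real.cos (t - φ) = Real.cos t * Real.cos φ + Real.sin t * Real.sin φ :=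
    Real.cos_sub t φ
  have hpyt : Real.sin φ ^ 2 + Real.cos φ ^ 2 = 1 := Real.sin_sq_add_cos_sq φ
  have hpyt' : Real.sin t ^ 2 + Real.cos t ^ 2 = 1 := Real.sin_sq_add_cos_sq t
  have heq : ((1-s)*(r*Real.cos φ)+s*Real.cos t)^2 + ((1-s)*(r*Real.sin φ)+s*Real.sin t)^2
      = (1-s)^2*r^2 + s^2 + 2*s*(1-s)*(r*Real.cos (t-φ)) := by
    linear_combination ((1-s)^2*r^2)*hpyt + s^2*hpyt' - 2*s*(1-s)*r*hc
  rw [heq]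
  nlinarith [sq_nonneg (1-s), mul_nonneg (mul_nonneg hs0 (sub_nonneg.mpr hs1)) (sub_nonneg.mpr hkey),
    mul_nonneg (sq_nonneg (1-s)) (sub_nonneg.mpr ((by nlinarith : (1:ℝ) ≤ r^2))), sq_nonneg s]
end

section
/- For every θ ∈ [0, π/2), the point A = (1, tan θ) inspects P_t for every t ∈ [0, 2θ], i.e., for all s ∈ [0,1], ‖(1−s)·A + s·P_t‖ ≥ 1. -/
open Real Set

theorem initial_point_inspects (θ : ℝ) (hθ : θ ∈ Set.Ico 0 (π/2)) (t : ℝ)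
    (ht : t ∈ Set.Icc 0 (2*θ)) :
    Inspects (!₂[1, Real.tan θ] : EuclideanSpace ℝ (Fin 2)) t := by
  obtain ⟨hθ0, hθ2⟩ := hθ
  obtain ⟨ht0, ht2⟩ := ht
  have hcosθ : 0 < Real.cos θ := by
    apply Real.cos_pos_of_mem_Ioo
    constructor <;> linarith [Real.pi_pos]
  -- key inequality: cos t + tan θ * sin t ≥ 1
  have habs : |t - θ| ≤ θ := by
    rw [abs_le]; constructor <;> linarith
  have hπ : θ ≤ π := by linarith [Real.pi_pos]
  have hcc : Real.cos θ ≤ Real.cos (t - θ) := by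
    rw [← Real.cos_abs (t - θ)]
    exact Real.cos_le_cos_of_nonneg_of_le_pi (abs_nonneg _) hπ habs
  have hkey : 1 ≤ Real.cos t + Real.tan θ * Real.sin t := by
    rw [Real.tan_eq_sin_div_cos]
    rw [Real.cos_sub] at hcc
    rw [← sub_nonneg]
    have : Real.cos t + Real.sin θ / Real.cos θ * Real.sin t - 1
        = (Real.cos t * Real.cos θ + Real.sin t * Real.sin θ - Real.cos θ) / Real.cos θ := by
      field_simp
    rw [this]
    exact div_nonneg (by linarith) hcosθ.le
  intro s hs
  obtain ⟨hs0, hs1⟩ := hs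
  rw [EuclideanSpace.norm_eq]
  rw [show (1:ℝ) = Real.sqrt 1 by simp]
  apply Real.sqrt_le_sqrt
  have hpy : Real.sin t ^ 2 + Real.cos t ^ 2 = 1 := Real.sin_sq_add_cos_sq t
  simp [Ppt, Fin.sum_univ_two, PiLp.add_apply, PiLp.smul_apply]
  nlinarith [sq_nonneg (1 - s), mul_nonneg (sub_nonneg.mpr hs1) (sub_nonneg.mpr hkey),
    mul_nonneg (mul_nonneg (sub_nonneg.mpr hs1) (sub_nonneg.mpr hs1))
      (add_nonneg (sq_nonneg (1 - Real.cos t)) (sq_nonneg (Real.tan θ - Real.sin t)))]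
end

section
/- Let φ ∈ ℝ and γ ∈ (0, π/2). Let A = L_φ(t₁) and B = L_{φ+γ}(t₂), where t₁ ≥ 0 and t₂ ≥ (1 − cos γ)/sin γ. Then for every χ ∈ [φ, φ+γ] there exists s ∈ [0,1] such that the point (1−s)·A + s·B inspects P_χ; in other words, the straight-line movement from A to B inspects all points P_χ with χ ∈ [φ, φ+γ]. -/
open Real Set

/-- The point at parameter `t` on the tangent line to the unit circle at `P_φ`. -/
noncomputable def Lpt (φ t : ℝ) : EuclideanSpace ℝ (Fin 2) :=
  !₂[Real.cos φ + t * Real.sin φ, Real.sin φ - t * Real.cos φ]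

lemma inspects_of_inner (X : EuclideanSpace ℝ (Fin 2)) (χ : ℝ)
    (h : 1 ≤ X 0 * Real.cos χ + X 1 * Real.sin χ) : Inspects X χ := by
  intro s hs
  obtain ⟨hs0, hs1⟩ := hs
  set Q := (1 - s) • X + s • Ppt χ with hQ
  have hQ0 : Q 0 = (1 - s) * X 0 + s * Real.cos χ := by
    simp [hQ, Ppt, PiLp.add_apply, PiLp.smul_apply, smul_eq_mul]
  have hQ1 : Q 1 = (1 - s) * X 1 + s * Real.sin χ := by
    simp [hQ, Ppt, PiLp.add_apply, PiLp.smul_apply, smul_eq_mul]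
  have hpyth : Real.cos χ ^ 2 + Real.sin χ ^ 2 = 1 := by
    have := Real.sin_sq_add_cos_sq χ; linarith
  have hinner : 1 ≤ Q 0 * Real.cos χ + Q 1 * Real.sin χ := by
    rw [hQ0, hQ1]; nlinarith [h]
  have hnorm : ‖Q‖ = Real.sqrt (Q 0 ^ 2 + Q 1 ^ 2) := by
    rw [EuclideanSpace.norm_eq]
    congr 1
    rw [Fin.sum_univ_two]
    simp [sq_abs]
  rw [hnorm]
  have hCS : 1 ≤ Q 0 ^ 2 + Q 1 ^ 2 := by
    nlinarith [sq_nonneg (Q 0 * Real.sin χ - Q 1 * Real.cos χ), hinner]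
  exact Real.one_le_sqrt.mpr hCS

theorem segment_inspects_sector (φ γ t₁ t₂ : ℝ) (hγ : γ ∈ Set.Ioo 0 (π/2))
    (ht₁ : 0 ≤ t₁) (ht₂ : (1 - Real.cos γ) / Real.sin γ ≤ t₂) :
    ∀ χ ∈ Set.Icc φ (φ + γ), ∃ s ∈ Set.Icc (0:ℝ) 1,
      Inspects ((1 - s) • Lpt φ t₁ + s • Lpt (φ + γ) t₂) χ := by
  intro χ hχ
  obtain ⟨hχ1, hχ2⟩ := hχ
  obtain ⟨hγ0, hγπ⟩ := hγ
  refine ⟨1, ⟨zero_le_one, le_refl 1⟩, ?_⟩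
  have hpt : (1 - (1:ℝ)) • Lpt φ t₁ + (1:ℝ) • Lpt (φ + γ) t₂ = Lpt (φ + γ) t₂ := by
    simp
  rw [hpt]
  apply inspects_of_inner
  -- set θ := φ + γ - χ
  set θ := φ + γ - χ with hθdef
  have hθ0 : 0 ≤ θ := by simp [hθdef]; linarith
  have hθγ : θ ≤ γ := by simp [hθdef]; linarith
  have hπ : (0:ℝ) < π := Real.pi_pos
  have hsinγ : 0 < Real.sin γ := Real.sin_pos_of_pos_of_lt_pi hγ0 (by linarith)
  have hsinθ : 0 ≤ Real.sin θ := Real.sin_nonneg_of_nonneg_of_le_pi hθ0 (by linarith)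
  have hsinγθ : 0 ≤ Real.sin (γ - θ) :=
    Real.sin_nonneg_of_nonneg_of_le_pi (by linarith) (by linarith)
  have ht₂' : 1 - Real.cos γ ≤ t₂ * Real.sin γ := by
    rw [div_le_iff₀ hsinγ] at ht₂; linarith
  -- inner product equals cos θ + t₂ * sin θ
  have hL0 : Lpt (φ + γ) t₂ 0 = Real.cos (φ+γ) + t₂ * Real.sin (φ+γ) := by
    simp [Lpt]
  have hL1 : Lpt (φ + γ) t₂ 1 = Real.sin (φ+γ) - t₂ * Real.cos (φ+γ) := by
    simp [Lpt]
  rw [hL0, hL1]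
  have hcosθ : Real.cos θ = Real.cos (φ+γ) * Real.cos χ + Real.sin (φ+γ) * Real.sin χ := by
    rw [hθdef, Real.cos_sub]
  have hsinθ' : Real.sin θ = Real.sin (φ+γ) * Real.cos χ - Real.cos (φ+γ) * Real.sin χ := by
    rw [hθdef, Real.sin_sub]
  have hgoal : (Real.cos (φ+γ) + t₂ * Real.sin (φ+γ)) * Real.cos χ +
      (Real.sin (φ+γ) - t₂ * Real.cos (φ+γ)) * Real.sin χ
      = Real.cos θ + t₂ * Real.sin θ := by
    rw [hcosθ, hsinθ']; ring
  rw [hgoal]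
  -- key: sin γ * cos θ + (1 - cos γ) * sin θ ≥ sin γ
  have hexp : Real.sin γ = Real.sin (γ - θ) * Real.cos θ + Real.cos (γ - θ) * Real.sin θ := by
    have : γ = (γ - θ) + θ := by ring
    nth_rewrite 1 [this]
    rw [Real.sin_add]
  have hcos1 : Real.cos θ ≤ 1 := Real.cos_le_one θ
  have hcos2 : Real.cos (γ - θ) ≤ 1 := Real.cos_le_one (γ - θ)
  have hkey : Real.sin γ ≤ Real.sin γ * Real.cos θ + (1 - Real.cos γ) * Real.sin θ := by
    have hcosγ : Real.cos γ = Real.cos (γ - θ) * Real.cos θ - Real.sin (γ - θ) * Real.sin θ := by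
      have : γ = (γ - θ) + θ := by ring
      nth_rewrite 1 [this]
      rw [Real.cos_add]
    rw [hexp, hcosγ]
    have hpy : Real.sin θ ^ 2 + Real.cos θ ^ 2 = 1 := Real.sin_sq_add_cos_sq θ
    nlinarith [mul_nonneg hsinγθ (by linarith : (0:ℝ) ≤ 1 - Real.cos θ),
      mul_nonneg hsinθ (by linarith : (0:ℝ) ≤ 1 - Real.cos (γ - θ)), hpy]
  nlinarith [mul_le_mul_of_nonneg_left ht₂' hsinθ, hkey, hsinγ]
end

section
/- Let n ≥ 3 be an integer. For i = 0, …, n−1 let θ_i := (2i+1)·π/n and define γ_i : [0, 1/cos(π/n)] → ℝ² by γ_i(t) = t·(cos θ_i, sin θ_i) (so each agent moves along a straight segment of length 1/cos(π/n) from the origin, and the n segments are rotations of each other by 2π/n). Then for every φ ∈ [0, 2π] there exist an index i and t ∈ [0, 1/cos(π/n)] with γ_i(t) inspecting P_φ, and the average inspection time satisfies (1/(2π))·∫₀^{2π} inspect(φ) dφ ≤ (n/(2π))·log((1 + sin(π/n))/(1 − sin(π/n))), where inspect(φ) := inf{ t ∈ [0, 1/cos(π/n)] : some γ_i(t) inspects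 P_φ }. -/
open Real Set

lemma normsq_key (t θ φ s : ℝ) :
    ‖(1 - s) • (t • Ppt θ) + s • Ppt φ‖^2
      = ((1-s)*t)^2 + 2*s*(1-s)*t*Real.cos (φ - θ) + s^2 := by
  have h1 : ‖(1 - s) • (t • Ppt θ) + s • Ppt φ‖^2
      = ∑ i, ((1 - s) • (t • Ppt θ) + s • Ppt φ) i ^ 2 := by
    rw [EuclideanSpace.norm_eq, Real.sq_sqrt (by positivity)]
    simp [Real.norm_eq_abs, sq_abs]
  rw [h1, Fin.sum_univ_two]
  simp only [Ppt, PiLp.add_apply, PiLp.smul_apply, smul_eq_mul,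
    Matrix.cons_val_zero, Matrix.cons_val_one, Matrix.head_cons, PiLp.toLp_apply]
  have hc := Real.cos_sub φ θ
  have h2 := Real.sin_sq_add_cos_sq θ
  have h3 := Real.sin_sq_add_cos_sq φ
  linear_combination ((1-s)*t)^2 * h2 + s^2 * h3 - 2*s*(1-s)*t*hc

lemma inspects_iff {t : ℝ} (ht : 0 ≤ t) (θ φ : ℝ) :
    Inspects (t • Ppt θ) φ ↔ 1 ≤ t * Real.cos (φ - θ) := by
  set d := Real.cos (φ - θ) with hd
  have hd1 : d ≤ 1 := Real.cos_le_one _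
  have hd2 : -1 ≤ d := Real.neg_one_le_cos _
  constructor
  · intro hI
    by_contra hlt
    push_neg at hlt
    set Q : ℝ := t^2 - 2*t*d + 1 with hQ
    have hQpos : 0 < Q := by nlinarith [sq_nonneg (t - d), sq_nonneg (t*d - 1)]
    set u : ℝ := min 1 ((1 - t*d)/Q) with hu
    have hu0 : 0 < u := lt_min one_pos (div_pos (by linarith) hQpos)
    have hu1 : u ≤ 1 := min_le_left _ _
    have huQ : u * Q ≤ 1 - t*d := by
      calc u * Q ≤ ((1 - t*d)/Q) * Q := by
            apply mul_le_mul_of_nonneg_right (min_le_right _ _) hQpos.le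
        _ = 1 - t*d := by field_simp
    have hs := hI (1 - u) ⟨by linarith, by linarith⟩
    have hk := normsq_key t θ φ (1 - u)
    have h2 : 1 ≤ ‖(1 - (1-u)) • (t • Ppt θ) + (1-u) • Ppt φ‖^2 := by
      nlinarith [hs, norm_nonneg ((1 - (1-u)) • (t • Ppt θ) + (1-u) • Ppt φ)]
    rw [hk] at h2
    nlinarith [h2, mul_pos hu0 hQpos]
  · intro h s hs
    have hk := normsq_key t θ φ s
    have hQ0 : 0 ≤ t^2 - 2*t*d + 1 := by nlinarith [sq_nonneg (t - d)]
    have h2 : 1 ≤ ‖(1 - s) • (t • Ppt θ) + s • Ppt φ‖^2 := by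
      rw [hk]
      obtain ⟨hs0, hs1⟩ := hs
      nlinarith [mul_nonneg (sub_nonneg.2 hs1) hQ0,
        mul_nonneg (mul_nonneg (sub_nonneg.2 hs1) (sub_nonneg.2 hs1)) hQ0]
    nlinarith [norm_nonneg ((1 - s) • (t • Ppt θ) + s • Ppt φ)]

lemma exists_near (n : ℕ) (hn : 1 ≤ n) (φ : ℝ) :
    ∃ i : Fin n, Real.cos (π/n) ≤ Real.cos (φ - (2*(i:ℕ)+1) * π / n) := by
  have hπ := Real.pi_pos
  have hn0 : (0:ℝ) < n := by exact_mod_cast Nat.pos_of_ne_zero (by omega)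
  have hn1 : (1:ℝ) ≤ n := by exact_mod_cast hn
  set x : ℝ := φ * n / (2*π) with hx
  set j : ℤ := ⌊x⌋ with hj
  have hnZ : (0:ℤ) < n := by exact_mod_cast Nat.pos_of_ne_zero (by omega)
  have hm0 : 0 ≤ j % n := Int.emod_nonneg j (by omega)
  have hm1 : j % n < n := Int.emod_lt_of_pos j hnZ
  refine ⟨⟨(j % n).toNat, by omega⟩, ?_⟩
  have hcast : (((j % n).toNat : ℕ) : ℝ) = ((j % n : ℤ) : ℝ) := by
    exact_mod_cast congrArg (Int.cast : ℤ → ℝ) (Int.toNat_of_nonneg hm0)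
  set y : ℝ := (2*π/n) * (x - j - 1/2) with hy
  have hφ : φ = x * (2*π) / n := by rw [hx]; field_simp
  have hdm : ((j % n : ℤ) : ℝ) = (j:ℝ) - (n:ℝ) * ((j / n : ℤ) : ℝ) := by
    have h := Int.mul_ediv_add_emod j n
    have h2 : (((n:ℤ) * (j/n) + j % n : ℤ) : ℝ) = (j : ℝ) := by
      exact_mod_cast congrArg (Int.cast : ℤ → ℝ) h
    push_cast at h2; linarith
  have hsplit : φ - (2*(((j % n).toNat : ℕ):ℝ)+1) * π / n = y + (j / n : ℤ) * (2*π) := by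
    rw [hcast, hdm, hφ, hy]; field_simp; ring
  rw [hsplit, Real.cos_add_int_mul_two_pi]
  have hxj0 : (0:ℝ) ≤ x - j := sub_nonneg.2 (Int.floor_le x)
  have hxj1 : x - j < 1 := by have := Int.lt_floor_add_one x; linarith
  have hyabs : |y| ≤ π/n := by
    rw [hy, abs_mul, abs_of_pos (show (0:ℝ) < 2*π/n by positivity)]
    have h3 : |x - j - 1/2| ≤ 1/2 := by rw [abs_le]; constructor <;> linarith
    calc 2*π/n * |x - j - 1/2| ≤ 2*π/n * (1/2) :=
          mul_le_mul_of_nonneg_left h3 (by positivity)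
      _ = π/n := by ring
  rw [← Real.cos_abs y]
  apply Real.cos_le_cos_of_nonneg_of_le_pi (abs_nonneg y) _ hyabs
  rw [div_le_iff₀ hn0]; nlinarith

lemma integral_sec (c : ℝ) (hc0 : 0 < c) (hc : c < π/2) :
    ∫ x in (-c)..c, (Real.cos x)⁻¹ = Real.log ((1+Real.sin c)/(1-Real.sin c)) := by
  have hπ := Real.pi_pos
  have hcospos : ∀ x ∈ Set.Icc (-c) c, 0 < Real.cos x := fun x hx =>
    Real.cos_pos_of_mem_Ioo ⟨by linarith [hx.1], by linarith [hx.2]⟩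
  set F : ℝ → ℝ := fun x => (Real.log (1+Real.sin x) - Real.log (1-Real.sin x))/2 with hF
  have key : ∀ x ∈ Set.Icc (-c) c, (0 < 1 + Real.sin x ∧ 0 < 1 - Real.sin x) := by
    intro x hx
    have hcx := hcospos x hx
    have hpy := Real.sin_sq_add_cos_sq x
    constructor <;> nlinarith
  have hderiv : ∀ x ∈ Set.uIcc (-c) c, HasDerivAt F ((Real.cos x)⁻¹) x := by
    intro x hx
    rw [Set.uIcc_of_le (by linarith)] at hx
    have hcx := hcospos x hx
    obtain ⟨h1p, h1m⟩ := key x hx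
    have hpy := Real.sin_sq_add_cos_sq x
    have d1 : HasDerivAt (fun y => 1 + Real.sin y) (Real.cos x) x :=
      (Real.hasDerivAt_sin x).const_add 1
    have d2 : HasDerivAt (fun y => 1 - Real.sin y) (-Real.cos x) x :=
      (Real.hasDerivAt_sin x).const_sub 1
    have h := ((d1.log h1p.ne').sub (d2.log h1m.ne')).div_const 2
    refine h.congr_deriv ?_
    field_simp
    nlinarith [hpy]
  have hint : IntervalIntegrable (fun x => (Real.cos x)⁻¹) MeasureTheory.volume (-c) c := by
    apply ContinuousOn.intervalIntegrable
    apply ContinuousOn.inv₀ Real.continuous_cos.continuousOn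
    intro x hx
    rw [Set.uIcc_of_le (by linarith)] at hx
    exact (hcospos x hx).ne'
  rw [intervalIntegral.integral_eq_sub_of_hasDerivAt hderiv hint]
  obtain ⟨h1p, h1m⟩ := key c ⟨by linarith, le_refl c⟩
  rw [Real.log_div h1p.ne' h1m.ne']
  simp only [hF, Real.sin_neg]
  ring


theorem n_agent_segments_average_bound (n : ℕ) (hn : 3 ≤ n) :
    (∀ φ ∈ Set.Icc 0 (2*π), ∃ i : Fin n, ∃ t ∈ Set.Icc 0 (1 / Real.cos (π/n)),
        Inspects (t • Ppt (((2 * (i : ℕ) + 1 : ℕ) : ℝ) * π / n)) φ) ∧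
    (1/(2*π)) * (∫ φ in (0:ℝ)..(2*π),
        sInf {t : ℝ | t ∈ Set.Icc 0 (1 / Real.cos (π/n)) ∧
          ∃ i : Fin n, Inspects (t • Ppt (((2 * (i : ℕ) + 1 : ℕ) : ℝ) * π / n)) φ})
      ≤ (n/(2*π)) * Real.log ((1 + Real.sin (π/n)) / (1 - Real.sin (π/n))) := by
  have hπ := Real.pi_pos
  have hn0 : (0:ℝ) < n := by exact_mod_cast Nat.pos_of_ne_zero (by omega)
  have hn3 : (3:ℝ) ≤ n := by exact_mod_cast hn
  set c : ℝ := π / n with hcdef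
  have hc0 : 0 < c := by positivity
  have hcπ : c < π/2 := by
    rw [hcdef, div_lt_div_iff₀ hn0 two_pos]; nlinarith
  have hcos : 0 < Real.cos c := Real.cos_pos_of_mem_Ioo ⟨by linarith, hcπ⟩
  set L : ℝ := 1 / Real.cos c with hLdef
  have hL0 : 0 < L := by positivity
  have hLc : L * Real.cos c = 1 := by rw [hLdef]; field_simp
  haveI : Nonempty (Fin n) := ⟨⟨0, by omega⟩⟩
  -- the angle of agent i as a real number
  have hθeq : ∀ i : ℕ, (((2 * i + 1 : ℕ) : ℝ) * π / n) = (2*(i:ℝ)+1) * π / n := by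
    intro i; push_cast; ring
  set M : ℝ → ℝ := fun φ =>
    Finset.univ.sup' Finset.univ_nonempty
      (fun i : Fin n => Real.cos (φ - (2*((i:ℕ):ℝ)+1) * π / n)) with hMdef
  have hMle : ∀ φ (i : Fin n), Real.cos (φ - (2*((i:ℕ):ℝ)+1) * π / n) ≤ M φ := by
    intro φ i
    rw [hMdef]
    exact Finset.le_sup' (fun i : Fin n => Real.cos (φ - (2*((i:ℕ):ℝ)+1) * π / n))
      (Finset.mem_univ i)
  have hMge : ∀ φ, Real.cos c ≤ M φ := by
    intro φ
    obtain ⟨i, hi⟩ := exists_near n (by omega) φ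
    exact le_trans hi (hMle φ i)
  have hM0 : ∀ φ, 0 < M φ := fun φ => lt_of_lt_of_le hcos (hMge φ)
  have hMcont : Continuous M := by
    apply Continuous.finset_sup'_apply
    intro i _
    exact Real.continuous_cos.comp (by continuity)
  -- the inspection set equals [ (M φ)⁻¹, L ]
  have hSinf : ∀ φ : ℝ,
      sInf {t : ℝ | t ∈ Set.Icc 0 L ∧
        ∃ i : Fin n, Inspects (t • Ppt (((2 * (i : ℕ) + 1 : ℕ) : ℝ) * π / n)) φ}
        = (M φ)⁻¹ := by
    intro φ
    obtain ⟨i₀, _, hi₀⟩ := Finset.exists_mem_eq_sup' (Finset.univ_nonempty (α := Fin n))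
      (fun i : Fin n => Real.cos (φ - (2*((i:ℕ):ℝ)+1) * π / n))
    have hmem : (M φ)⁻¹ ∈ {t : ℝ | t ∈ Set.Icc 0 L ∧
        ∃ i : Fin n, Inspects (t • Ppt (((2 * (i : ℕ) + 1 : ℕ) : ℝ) * π / n)) φ} := by
      refine ⟨⟨inv_nonneg.2 (hM0 φ).le, ?_⟩, ⟨i₀, ?_⟩⟩
      · rw [hLdef, one_div]
        exact inv_anti₀ hcos (hMge φ)
      · rw [hθeq i₀, inspects_iff (inv_nonneg.2 (hM0 φ).le)]
        have : M φ = Real.cos (φ - (2*((i₀:ℕ):ℝ)+1) * π / n) := by rw [hMdef]; exact hi₀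
        rw [← this, inv_mul_cancel₀ (hM0 φ).ne']
    have hlb : ∀ t ∈ {t : ℝ | t ∈ Set.Icc 0 L ∧
        ∃ i : Fin n, Inspects (t • Ppt (((2 * (i : ℕ) + 1 : ℕ) : ℝ) * π / n)) φ},
        (M φ)⁻¹ ≤ t := by
      rintro t ⟨⟨ht0, htL⟩, i, hI⟩
      rw [hθeq i, inspects_iff ht0] at hI
      have h1 : 1 ≤ t * M φ :=
        le_trans hI (mul_le_mul_of_nonneg_left (hMle φ i) ht0)
      rw [inv_eq_one_div, div_le_iff₀ (hM0 φ)]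
      linarith
    exact le_antisymm (csInf_le ⟨0, fun t ht => ht.1.1⟩ hmem) (le_csInf ⟨_, hmem⟩ hlb)
  constructor
  · -- coverage
    intro φ _
    obtain ⟨i, hi⟩ := exists_near n (by omega) φ
    refine ⟨i, L, ⟨hL0.le, le_refl L⟩, ?_⟩
    rw [hθeq i, inspects_iff hL0.le]
    calc (1:ℝ) = L * Real.cos c := hLc.symm
      _ ≤ L * Real.cos (φ - (2*((i:ℕ):ℝ)+1) * π / n) :=
          mul_le_mul_of_nonneg_left hi hL0.le
  · -- integral bound
    have hcong : (∫ φ in (0:ℝ)..(2*π),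
        sInf {t : ℝ | t ∈ Set.Icc 0 L ∧
          ∃ i : Fin n, Inspects (t • Ppt (((2 * (i : ℕ) + 1 : ℕ) : ℝ) * π / n)) φ})
        = ∫ φ in (0:ℝ)..(2*π), (M φ)⁻¹ :=
      intervalIntegral.integral_congr (fun φ _ => hSinf φ)
    rw [hcong]
    set I : ℝ := Real.log ((1 + Real.sin c) / (1 - Real.sin c)) with hI
    set a : ℕ → ℝ := fun k => 2*π*k/n with ha
    have hMinv_cont : Continuous (fun φ => (M φ)⁻¹) :=
      hMcont.inv₀ (fun φ => (hM0 φ).ne')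
    have hint : ∀ k : ℕ, k < n → IntervalIntegrable (fun φ => (M φ)⁻¹)
        MeasureTheory.volume (a k) (a (k+1)) :=
      fun k _ => hMinv_cont.intervalIntegrable _ _
    have hsum := intervalIntegral.sum_integral_adjacent_intervals hint
    have ha0 : a 0 = 0 := by simp [ha]
    have han : a n = 2*π := by rw [ha]; field_simp
    rw [ha0, han] at hsum
    have hsector : ∀ k : ℕ, k < n →
        (∫ φ in (a k)..(a (k+1)), (M φ)⁻¹) ≤ I := by
      intro k hk
      set θk : ℝ := (2*(k:ℝ)+1) * π / n with hθk
      have hak : a k = θk - c := by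
        simp only [ha, hθk, hcdef]; push_cast; field_simp; ring
      have hak1 : a (k+1) = θk + c := by
        simp only [ha, hθk, hcdef]; push_cast; field_simp; ring
      have hab : a k ≤ a (k+1) := by rw [hak, hak1]; linarith
      have hcospos : ∀ φ ∈ Set.Icc (a k) (a (k+1)), 0 < Real.cos (φ - θk) := by
        intro φ hφ
        rw [hak] at hφ; rw [hak1] at hφ
        apply Real.cos_pos_of_mem_Ioo
        constructor
        · linarith [hφ.1]
        · linarith [hφ.2]
      have hsecint : IntervalIntegrable (fun φ => (Real.cos (φ - θk))⁻¹)
          MeasureTheory.volume (a k) (a (k+1)) := by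
        apply ContinuousOn.intervalIntegrable
        apply ContinuousOn.inv₀
          ((Real.continuous_cos.comp (continuous_id.sub continuous_const)).continuousOn)
        intro φ hφ
        rw [Set.uIcc_of_le hab] at hφ
        exact (hcospos φ hφ).ne'
      have hmono : (∫ φ in (a k)..(a (k+1)), (M φ)⁻¹)
          ≤ ∫ φ in (a k)..(a (k+1)), (Real.cos (φ - θk))⁻¹ := by
        apply intervalIntegral.integral_mono_on hab (hint k hk) hsecint
        intro φ hφ
        have h1 := hcospos φ hφ
        have h2 : Real.cos (φ - θk) ≤ M φ := by
          have := hMle φ ⟨k, hk⟩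
          simpa [hθk] using this
        exact inv_anti₀ h1 h2
      have hchange : (∫ φ in (a k)..(a (k+1)), (Real.cos (φ - θk))⁻¹)
          = ∫ u in (-c)..c, (Real.cos u)⁻¹ := by
        have := intervalIntegral.integral_comp_sub_right
          (a := a k) (b := a (k+1)) (fun u => (Real.cos u)⁻¹) θk
        rw [this, hak, hak1]
        norm_num
      calc (∫ φ in (a k)..(a (k+1)), (M φ)⁻¹)
          ≤ ∫ φ in (a k)..(a (k+1)), (Real.cos (φ - θk))⁻¹ := hmono
        _ = ∫ u in (-c)..c, (Real.cos u)⁻¹ := hchange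
        _ = I := by rw [hI]; exact integral_sec c hc0 hcπ
    have hsumle : ∑ k ∈ Finset.range n, (∫ φ in (a k)..(a (k+1)), (M φ)⁻¹) ≤ n * I := by
      calc ∑ k ∈ Finset.range n, (∫ φ in (a k)..(a (k+1)), (M φ)⁻¹)
          ≤ ∑ _k ∈ Finset.range n, I :=
            Finset.sum_le_sum (fun k hk => hsector k (Finset.mem_range.1 hk))
        _ = n * I := by rw [Finset.sum_const, Finset.card_range, nsmul_eq_mul]
    have hfinal : (∫ φ in (0:ℝ)..(2*π), (M φ)⁻¹) ≤ n * I := by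
      rw [← hsum]; exact hsumle
    calc (1/(2*π)) * (∫ φ in (0:ℝ)..(2*π), (M φ)⁻¹)
        ≤ (1/(2*π)) * (n * I) :=
          mul_le_mul_of_nonneg_left hfinal (by positivity)
      _ = (n/(2*π)) * I := by ring
end

section
/- As n → ∞ (over the positive integers), n²·( (n/(2π))·log((1 + sin(π/n))/(1 − sin(π/n))) − 1 ) tends to π²/6. In particular, the average-case inspection cost bound (n/(2π))·log((1 + sin(π/n))/(1 − sin(π/n))) for n agents equals 1 + π²/(6n²) + o(1/n²) asymptotically. -/
open Real Filter Set

lemma sin_div_self_tendsto : Tendsto (fun y : ℝ => Real.sin y / y) (nhdsWithin 0 {(0:ℝ)}ᶜ) (nhds 1) := by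
  have h := (Real.hasDerivAt_sin 0)
  rw [Real.cos_zero, hasDerivAt_iff_tendsto_slope] at h
  refine h.congr' ?_
  filter_upwards [self_mem_nhdsWithin] with y hy
  simp [slope_def_field]

lemma one_sub_cos_div_sq : Tendsto (fun x : ℝ => (1 - Real.cos x) / x^2) (nhdsWithin 0 (Ioi 0)) (nhds (1/2)) := by
  have hmap : Tendsto (fun x : ℝ => x / 2) (nhdsWithin 0 (Ioi 0)) (nhdsWithin 0 {(0:ℝ)}ᶜ) := by
    apply tendsto_nhdsWithin_of_tendsto_nhds_of_eventually_within
    · have : Tendsto (fun x : ℝ => x / 2) (nhds 0) (nhds 0) := by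
        simpa using (continuous_id.div_const (2:ℝ)).tendsto' 0 0 (by norm_num)
      exact this.mono_left nhdsWithin_le_nhds
    · filter_upwards [self_mem_nhdsWithin] with x hx
      simp only [Set.mem_compl_iff, Set.mem_singleton_iff]
      exact div_ne_zero (ne_of_gt hx) two_ne_zero
  have h1 : Tendsto (fun x : ℝ => (Real.sin (x/2) / (x/2))^2 * (1/2)) (nhdsWithin 0 (Ioi 0)) (nhds ((1:ℝ)^2 * (1/2))) :=
    ((sin_div_self_tendsto.comp hmap).pow 2).mul_const (1/2)
  norm_num at h1
  refine h1.congr' ?_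
  filter_upwards [self_mem_nhdsWithin] with x hx
  have hx0 : x ≠ 0 := ne_of_gt hx
  have hc : Real.cos x = 1 - 2 * Real.sin (x/2)^2 := by
    have h2 := Real.cos_two_mul (x/2)
    have h3 := Real.sin_sq_add_cos_sq (x/2)
    rw [show 2*(x/2) = x by ring] at h2
    linarith
  rw [hc]
  field_simp
  ring

lemma key_limit : Tendsto (fun x : ℝ => ((1/2) * Real.log ((1 + Real.sin x) / (1 - Real.sin x)) - x) / x^3)
    (nhdsWithin 0 (Ioi 0)) (nhds (1/6)) := by
  have h1 : (1:ℝ) < π / 2 := by nlinarith [Real.pi_gt_three]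
  apply HasDerivAt.lhopital_zero_right_on_Ioo (f' := fun x => 1 / Real.cos x - 1)
    (g' := fun x => 3 * x^2) (b := 1) one_pos
  · intro x hx
    have hx1 : 0 < x := hx.1
    have hx2 : x < π/2 := lt_trans hx.2 h1
    have hcos : 0 < Real.cos x := Real.cos_pos_of_mem_Ioo ⟨by linarith, hx2⟩
    have hs1 : Real.sin x < 1 := lt_trans (Real.sin_lt hx1) hx.2
    have hs0 : 0 < Real.sin x := Real.sin_pos_of_pos_of_lt_pi hx1 (by nlinarith [Real.pi_gt_three])
    have hne1 : (1:ℝ) + Real.sin x ≠ 0 := by linarith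
    have hne2 : (1:ℝ) - Real.sin x ≠ 0 := by linarith
    have hcne : Real.cos x ≠ 0 := ne_of_gt hcos
    have hd : HasDerivAt (fun x => (1/2) * (Real.log (1 + Real.sin x) - Real.log (1 - Real.sin x)) - x)
        (1 / Real.cos x - 1) x := by
      have d1 : HasDerivAt (fun x => Real.log (1 + Real.sin x)) (Real.cos x / (1 + Real.sin x)) x :=
        (((Real.hasDerivAt_sin x).const_add 1)).log hne1
      have d2 : HasDerivAt (fun x => Real.log (1 - Real.sin x)) ((-Real.cos x) / (1 - Real.sin x)) x :=
        (((Real.hasDerivAt_sin x).const_sub 1)).log hne2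
      have hD : HasDerivAt (fun x => (1/2) * (Real.log (1 + Real.sin x) - Real.log (1 - Real.sin x)) - x)
          (1/2 * (Real.cos x / (1 + Real.sin x) - (-Real.cos x) / (1 - Real.sin x)) - 1) x := ((d1.sub d2).const_mul (1/2)).sub (hasDerivAt_id x)
      convert hD using 1
      have hc2 : Real.cos x ^ 2 = (1 + Real.sin x) * (1 - Real.sin x) := by
        nlinarith [Real.sin_sq_add_cos_sq x]
      field_simp
      nlinarith [hc2]
    refine hd.congr_of_eventuallyEq ?_
    filter_upwards [isOpen_Ioo.mem_nhds hx] with y hy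
    have hy2 : y < π/2 := lt_trans hy.2 h1
    have hs1' : Real.sin y < 1 := lt_trans (Real.sin_lt hy.1) hy.2
    have hs0' : 0 < Real.sin y := Real.sin_pos_of_pos_of_lt_pi hy.1 (by nlinarith [Real.pi_gt_three])
    rw [Real.log_div (by linarith) (by linarith)]
  · intro x hx
    simpa using (hasDerivAt_pow 3 x)
  · intro x hx
    have hx0 : x ≠ 0 := ne_of_gt hx.1
    positivity
  · have hc : ContinuousAt (fun x => (1/2) * Real.log ((1 + Real.sin x) / (1 - Real.sin x)) - x) 0 := by
      have hq : ContinuousAt (fun x => (1 + Real.sin x) / (1 - Real.sin x)) 0 := by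
        apply ContinuousAt.div
        · fun_prop
        · fun_prop
        · simp
      exact (((Real.continuousAt_log (by norm_num)).comp hq).const_mul _).sub continuousAt_id
    have h0 := hc.tendsto
    norm_num at h0
    exact h0.mono_left nhdsWithin_le_nhds
  · have : Tendsto (fun x : ℝ => x^3) (nhds (0:ℝ)) (nhds ((0:ℝ)^3)) := (continuous_pow 3).tendsto 0
    norm_num at this
    exact this.mono_left nhdsWithin_le_nhds
  · have hcos : Tendsto (fun x : ℝ => 1 / (3 * Real.cos x)) (nhdsWithin 0 (Ioi 0)) (nhds (1 / 3)) := by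
      have h3 : Tendsto (fun x : ℝ => 3 * Real.cos x) (nhds (0:ℝ)) (nhds 3) := by
        have := (Real.continuous_cos.tendsto 0).const_mul 3
        simpa using this
      exact (tendsto_const_nhds.div h3 (by norm_num)).mono_left nhdsWithin_le_nhds
    have hmul := one_sub_cos_div_sq.mul hcos
    norm_num at hmul
    refine hmul.congr' ?_
    filter_upwards [Ioo_mem_nhdsGT_of_mem (show (0:ℝ) ∈ Ico 0 1 by norm_num)] with x hx
    have hx1 : 0 < x := hx.1
    have hx2 : x < π/2 := lt_trans hx.2 h1
    have hcos : 0 < Real.cos x := Real.cos_pos_of_mem_Ioo ⟨by linarith, hx2⟩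
    have hx0 : (x:ℝ) ≠ 0 := ne_of_gt hx.1
    have hcne : Real.cos x ≠ 0 := ne_of_gt hcos
    field_simp
    try ring
    try tauto

theorem average_cost_asymptotics :
    Tendsto (fun n : ℕ =>
        (n:ℝ)^2 * ((n/(2*π)) * Real.log ((1 + Real.sin (π/n)) / (1 - Real.sin (π/n))) - 1))
      atTop (nhds (π^2/6)) := by
  have hπ : (0:ℝ) < π := Real.pi_pos
  have hmap : Tendsto (fun n : ℕ => π / n) atTop (nhdsWithin 0 (Ioi 0)) := by
    apply tendsto_nhdsWithin_of_tendsto_nhds_of_eventually_within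
    · simpa [div_eq_mul_inv] using tendsto_one_div_atTop_nhds_zero_nat.const_mul π
    · filter_upwards [eventually_gt_atTop 0] with n hn
      have : (0:ℝ) < n := by exact_mod_cast hn
      exact div_pos hπ this
  have h := (key_limit.comp hmap).const_mul (π^2)
  rw [show π^2 * (1/6) = π^2/6 by ring] at h
  refine h.congr' ?_
  filter_upwards [eventually_gt_atTop 0] with n hn
  have hn0 : (0:ℝ) < n := by exact_mod_cast hn
  have hn0' : (n:ℝ) ≠ 0 := ne_of_gt hn0
  have hπ' : π ≠ 0 := ne_of_gt hπ
  simp only [Function.comp]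
  field_simp
end

section
/- For every c ∈ [π/2, 2π/3]: 1/sin(c/2 + π/4) + tan(c/2 − π/4) + 1 ≥ 1/cos(c/2). (Equivalently, the optimal Type-2 curve length 1 + 1/sin(c/2 + π/4) + tan(c/2 − π/4) is at least the optimal Type-1 curve length 1/cos(c/2) on this range of arc lengths c.) -/
open Real

theorem type2_ge_type1_first_range (c : ℝ) (hc : c ∈ Set.Icc (π/2) (2*π/3)) :
    1 / Real.cos (c/2) ≤ 1 / Real.sin (c/2 + π/4) + Real.tan (c/2 - π/4) + 1 := by
  obtain ⟨h1, h2⟩ := hc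
  have hπ := Real.pi_gt_d6
  have hπ' := Real.pi_lt_d2
  set t := c/2 - π/4 with ht
  have hc2 : c/2 = t + π/4 := by rw [ht]; ring
  have ht0 : 0 ≤ t := by rw [ht]; linarith
  have ht1 : t ≤ π/12 := by rw [ht]; linarith
  have hs_le : Real.sin t ≤ 0.2625 := le_trans (Real.sin_le ht0) (by linarith)
  have hs0 : 0 ≤ Real.sin t := Real.sin_nonneg_of_nonneg_of_le_pi ht0 (ht1.trans (by linarith))
  have hco1 : Real.cos t ≤ 1 := Real.cos_le_one t
  have hco0 : 0 < Real.cos t := Real.cos_pos_of_mem_Ioo ⟨by linarith, by linarith⟩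
  have hpyth := Real.sin_sq_add_cos_sq t
  have hsq2 := Real.sq_sqrt (by norm_num : (0:ℝ) ≤ 2)
  have hsqnn := Real.sqrt_nonneg 2
  have hsqrt2lo : (1.4142:ℝ) ≤ Real.sqrt 2 := by nlinarith
  have hsqrt2hi : Real.sqrt 2 ≤ 1.41422 := by nlinarith
  have hcs : Real.sin t < Real.cos t := by nlinarith
  have hcos : Real.cos (c/2) = (Real.cos t - Real.sin t) * (Real.sqrt 2 / 2) := by
    rw [hc2, Real.cos_add, Real.cos_pi_div_four, Real.sin_pi_div_four]; ring
  have hsin : Real.sin (c/2 + π/4) = Real.cos t := by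
    rw [hc2, show t + π/4 + π/4 = t + π/2 by ring, Real.sin_add_pi_div_two]
  have hcospos : 0 < Real.cos (c/2) := by
    rw [hcos]; nlinarith
  have htan : Real.tan (c/2 - π/4) = Real.sin t / Real.cos t := by
    rw [← ht, Real.tan_eq_sin_div_cos]
  rw [hcos, hsin, htan]
  have key : 1 / ((Real.cos t - Real.sin t) * (Real.sqrt 2 / 2))
      ≤ (1 + Real.sin t + Real.cos t) / Real.cos t := by
    rw [div_le_div_iff₀ (by nlinarith) hco0]
    nlinarith [sq_nonneg (Real.sin t), sq_nonneg (Real.cos t - 1)]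
  calc 1 / ((Real.cos t - Real.sin t) * (Real.sqrt 2 / 2))
      ≤ (1 + Real.sin t + Real.cos t) / Real.cos t := key
    _ = 1 / Real.cos t + Real.sin t / Real.cos t + 1 := by
        field_simp
end

section
/- For every c ∈ [2π/3, 5π/6]: 1/sin(c/2 + π/4) + tan(c/2 − π/4) + 2·cos c ≥ 0. (Equivalently, the optimal Type-2 curve length 1 + 1/sin(c/2 + π/4) + tan(c/2 − π/4) is at least the optimal Type-1 curve length 1 − 2·cos c on this range of arc lengths c.) -/
open Real

theorem type2_ge_type1_second_range (c : ℝ) (hc : c ∈ Set.Icc (2*π/3) (5*π/6)) :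
    0 ≤ 1 / Real.sin (c/2 + π/4) + Real.tan (c/2 - π/4) + 2 * Real.cos c := by
  obtain ⟨h1, h2⟩ := hc
  have hpi := Real.pi_pos
  set t := c/2 - π/4 with ht
  have hsin : Real.sin (c/2 + π/4) = Real.cos t := by
    have : c/2 + π/4 = t + π/2 := by rw [ht]; ring
    rw [this, Real.sin_add_pi_div_two]
  have hcos : Real.cos c = -Real.sin (2*t) := by
    have : c = 2*t + π/2 := by rw [ht]; ring
    rw [this, Real.cos_add_pi_div_two]
  have ht2 : t < π/2 := by rw [ht]; linarith
  have hct : 0 < Real.cos t := by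
    apply Real.cos_pos_of_mem_Ioo
    constructor
    · rw [ht]; linarith
    · exact ht2
  rw [hsin, hcos, Real.tan_eq_sin_div_cos, Real.sin_two_mul]
  have hpyth : Real.sin t ^ 2 + Real.cos t ^ 2 = 1 := Real.sin_sq_add_cos_sq t
  have hs1 : -1 ≤ Real.sin t := Real.neg_one_le_sin t
  have hkey : 1 / Real.cos t + Real.sin t / Real.cos t + 2 * -(2 * Real.sin t * Real.cos t)
      = (2 * Real.sin t - 1)^2 * (Real.sin t + 1) / Real.cos t := by
    field_simp
    nlinarith [hpyth]
  rw [hkey]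
  exact div_nonneg (mul_nonneg (sq_nonneg _) (by linarith)) hct.le
end

section
/- For every c ∈ [5π/6, 3π/2): 1/sin(c/2 + π/4) + tan(c/2 − π/4) ≥ √3 + c − 5π/6. (Equivalently, the optimal Type-1 curve length 1 + 1/sin(c/2 + π/4) + tan(c/2 − π/4) is at least the optimal Type-2 curve length 1 + √3 + c − 5π/6 on this range of arc lengths c.) -/
open Real

private lemma aux_mono : MonotoneOn (fun t : ℝ => (1 + Real.sin t) / Real.cos t - 2 * t)
    (Set.Ico (π/6) (π/2)) := by
  have hconv : Convex ℝ (Set.Ico (π/6 : ℝ) (π/2)) := convex_Ico _ _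
  apply monotoneOn_of_deriv_nonneg hconv
  · apply ContinuousOn.sub
    · apply ContinuousOn.div
      · fun_prop
      · fun_prop
      · intro x hx
        have : 0 < Real.cos x := Real.cos_pos_of_mem_Ioo ⟨by linarith [hx.1, Real.pi_pos], hx.2⟩
        linarith
    · fun_prop
  · rw [interior_Ico]
    intro x hx
    have hcos : 0 < Real.cos x := Real.cos_pos_of_mem_Ioo ⟨by linarith [hx.1, Real.pi_pos], hx.2⟩
    exact (((Real.hasDerivAt_sin x).const_add 1).div (Real.hasDerivAt_cos x) hcos.ne').sub
      ((hasDerivAt_id x).const_mul 2) |>.differentiableAt.differentiableWithinAt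
  · rw [interior_Ico]
    intro x hx
    have hcos : 0 < Real.cos x := Real.cos_pos_of_mem_Ioo ⟨by linarith [hx.1, Real.pi_pos], hx.2⟩
    have hsin : (1:ℝ)/2 ≤ Real.sin x := by
      have h := Real.sin_le_sin_of_le_of_le_pi_div_two (x := π/6) (y := x)
        (by linarith [Real.pi_pos]) (le_of_lt hx.2) (le_of_lt hx.1)
      rwa [Real.sin_pi_div_six] at h
    have hd : HasDerivAt (fun t : ℝ => (1 + Real.sin t) / Real.cos t - 2 * t)
        ((Real.cos x * Real.cos x - (1 + Real.sin x) * (-Real.sin x)) / Real.cos x ^ 2 - 2 * 1)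
        x :=
      (((Real.hasDerivAt_sin x).const_add 1).div (Real.hasDerivAt_cos x) hcos.ne').sub
        ((hasDerivAt_id x).const_mul 2)
    rw [hd.deriv]
    have hc2 : (0:ℝ) < Real.cos x ^ 2 := by positivity
    rw [sub_nonneg, ← sub_nonneg, mul_one]
    have : 2 ≤ (Real.cos x * Real.cos x - (1 + Real.sin x) * (-Real.sin x)) / Real.cos x ^ 2 := by
      rw [le_div_iff₀ hc2]
      nlinarith [Real.sin_sq_add_cos_sq x]
    linarith

theorem type1_ge_type2_third_range (c : ℝ) (hc : c ∈ Set.Ico (5*π/6) (3*π/2)) :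
    Real.sqrt 3 + c - 5*π/6 ≤ 1 / Real.sin (c/2 + π/4) + Real.tan (c/2 - π/4) := by
  obtain ⟨h1, h2⟩ := hc
  set t := c/2 - π/4 with ht_def
  have ht : t ∈ Set.Ico (π/6) (π/2) := ⟨by rw [ht_def]; linarith, by rw [ht_def]; linarith⟩
  have hcos : 0 < Real.cos t := Real.cos_pos_of_mem_Ioo ⟨by linarith [ht.1, Real.pi_pos], ht.2⟩
  have hsin_eq : Real.sin (c/2 + π/4) = Real.cos t := by
    rw [show c/2 + π/4 = t + π/2 by rw [ht_def]; ring, Real.sin_add_pi_div_two]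
  have hrhs : 1 / Real.sin (c/2 + π/4) + Real.tan (c/2 - π/4)
      = (1 + Real.sin t) / Real.cos t := by
    rw [hsin_eq, ← ht_def, Real.tan_eq_sin_div_cos]
    field_simp
  rw [hrhs]
  have hs3 : Real.sqrt 3 ^ 2 = 3 := Real.sq_sqrt (by norm_num)
  have hs3pos : 0 < Real.sqrt 3 := Real.sqrt_pos.mpr (by norm_num)
  have h6 : (1 + Real.sin (π/6)) / Real.cos (π/6) = Real.sqrt 3 := by
    rw [Real.sin_pi_div_six, Real.cos_pi_div_six, div_eq_iff (by positivity)]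
    nlinarith
  have hmem6 : (π/6 : ℝ) ∈ Set.Ico (π/6) (π/2) := ⟨le_refl _, by linarith [Real.pi_pos]⟩
  have hmono := aux_mono hmem6 ht ht.1
  simp only at hmono
  rw [h6] at hmono
  have : c = 2 * t + π/2 := by rw [ht_def]; ring
  linarith
end

section
/- For every θ ∈ [0, π/2): ∫₀^{2θ} 1/cos(θ − φ) dφ + ∫_{2θ}^{3π/2} (1/cos θ + tan θ + φ − 2θ) dφ + ∫_{3π/2}^{2π} (1/cos θ + tan θ + 3π/2 − 2θ + tan(φ/2 − 3π/4)) dφ = log((1 + sin θ)/(1 − sin θ)) + 2θ² − 4πθ + 2(π − θ)·tan θ + 2(π − θ)/cos θ + 15π²/8 + log 2. Consequently, the average inspection cost of the Isbell-type trajectory with deployment angle θ equals (1/(2π))·( log((1 + sin θ)/(1 − sin θ)) + 2θ² − 4πθ + 2(π − θ)·tan θ + 2(π − θ)/cos θ + 15π²/8 + log 2 ). -/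
open Real

lemma sec_integral (θ : ℝ) (hθ : θ ∈ Set.Ico 0 (π/2)) :
    (∫ φ in (0:ℝ)..(2*θ), 1 / Real.cos (θ - φ)) =
      Real.log ((1 + Real.sin θ) / (1 - Real.sin θ)) := by
  obtain ⟨hθ0, hθ2⟩ := hθ
  have hπ := Real.pi_pos
  have key : ∀ φ ∈ Set.uIcc (0:ℝ) (2*θ),
      HasDerivAt (fun φ => -(Real.log (1 + Real.sin (θ - φ)) - Real.log (Real.cos (θ - φ))))
        (1 / Real.cos (θ - φ)) φ := by
    intro φ hφ
    rw [Set.uIcc_of_le (by linarith)] at hφ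
    obtain ⟨h1, h2⟩ := hφ
    have hmem : θ - φ ∈ Set.Ioo (-(π/2)) (π/2) := ⟨by linarith, by linarith⟩
    have hc : 0 < Real.cos (θ - φ) := Real.cos_pos_of_mem_Ioo hmem
    have hs : -1 < Real.sin (θ - φ) := by
      rcases lt_or_eq_of_le (Real.neg_one_le_sin (θ - φ)) with h | h
      · exact h
      · exfalso; nlinarith [Real.sin_sq_add_cos_sq (θ - φ)]
    have hs1 : 0 < 1 + Real.sin (θ - φ) := by linarith
    have hinner : HasDerivAt (fun φ : ℝ => θ - φ) (-1) φ := by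
      simpa using ((hasDerivAt_id φ).const_sub θ)
    have hsin : HasDerivAt (fun φ : ℝ => 1 + Real.sin (θ - φ))
        (Real.cos (θ - φ) * (-1)) φ :=
      ((Real.hasDerivAt_sin (θ - φ)).comp φ hinner).const_add 1
    have hcos : HasDerivAt (fun φ : ℝ => Real.cos (θ - φ))
        (-Real.sin (θ - φ) * (-1)) φ :=
      (Real.hasDerivAt_cos (θ - φ)).comp φ hinner
    have hlog1 : HasDerivAt (fun φ : ℝ => Real.log (1 + Real.sin (θ - φ)))
        ((Real.cos (θ - φ) * (-1)) / (1 + Real.sin (θ - φ))) φ :=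
      hsin.log (ne_of_gt hs1)
    have hlog2 : HasDerivAt (fun φ : ℝ => Real.log (Real.cos (θ - φ)))
        ((-Real.sin (θ - φ) * (-1)) / Real.cos (θ - φ)) φ :=
      hcos.log (ne_of_gt hc)
    have hd := (hlog1.sub hlog2).neg
    refine hd.congr_deriv ?_
    field_simp
    nlinarith [Real.sin_sq_add_cos_sq (θ - φ)]
  have hint : IntervalIntegrable (fun φ => 1 / Real.cos (θ - φ)) MeasureTheory.volume 0 (2*θ) := by
    apply ContinuousOn.intervalIntegrable
    intro φ hφ
    rw [Set.uIcc_of_le (by linarith)] at hφ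
    obtain ⟨h1, h2⟩ := hφ
    have hc : 0 < Real.cos (θ - φ) :=
      Real.cos_pos_of_mem_Ioo ⟨by linarith, by linarith⟩
    exact (ContinuousAt.continuousWithinAt
      (continuousAt_const.div
        ((Real.continuous_cos.continuousAt).comp
          ((continuous_const.sub continuous_id).continuousAt)) (ne_of_gt hc)))
  rw [intervalIntegral.integral_eq_sub_of_hasDerivAt key hint]
  have hc : 0 < Real.cos θ := Real.cos_pos_of_mem_Ioo ⟨by linarith, hθ2⟩
  have hsnn : 0 ≤ Real.sin θ := Real.sin_nonneg_of_nonneg_of_le_pi hθ0 (by linarith)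
  have hs : Real.sin θ < 1 := by
    rcases lt_or_eq_of_le (Real.sin_le_one θ) with h | h
    · exact h
    · exfalso; nlinarith [Real.sin_sq_add_cos_sq θ]
  have h2θ : θ - 2*θ = -θ := by ring
  rw [h2θ, sub_zero, Real.sin_neg, Real.cos_neg]
  have e1 : -(Real.log (1 + -Real.sin θ) - Real.log (Real.cos θ))
      - -(Real.log (1 + Real.sin θ) - Real.log (Real.cos θ))
      = Real.log (1 + Real.sin θ) - Real.log (1 - Real.sin θ) := by ring_nf
  rw [e1, ← Real.log_div (by linarith) (by linarith)]

lemma tan_integral :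
    (∫ φ in (3*π/2)..(2*π), Real.tan (φ/2 - 3*π/4)) = Real.log 2 := by
  have hπ := Real.pi_pos
  have key : ∀ φ ∈ Set.uIcc (3*π/2) (2*π),
      HasDerivAt (fun φ => -2 * Real.log (Real.cos (φ/2 - 3*π/4)))
        (Real.tan (φ/2 - 3*π/4)) φ := by
    intro φ hφ
    rw [Set.uIcc_of_le (by linarith)] at hφ
    obtain ⟨h1, h2⟩ := hφ
    have hc : 0 < Real.cos (φ/2 - 3*π/4) :=
      Real.cos_pos_of_mem_Ioo ⟨by linarith, by linarith⟩
    have hinner : HasDerivAt (fun φ : ℝ => φ/2 - 3*π/4) (1/2) φ := by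
      simpa using ((hasDerivAt_id φ).div_const 2).sub_const (3*π/4)
    have hcos : HasDerivAt (fun φ : ℝ => Real.cos (φ/2 - 3*π/4))
        (-Real.sin (φ/2 - 3*π/4) * (1/2)) φ :=
      by have := (Real.hasDerivAt_cos (φ/2 - 3*π/4)).comp φ hinner; exact this
    have hlog : HasDerivAt (fun φ : ℝ => Real.log (Real.cos (φ/2 - 3*π/4)))
        ((-Real.sin (φ/2 - 3*π/4) * (1/2)) / Real.cos (φ/2 - 3*π/4)) φ :=
      hcos.log (ne_of_gt hc)
    have hd := hlog.const_mul (-2 : ℝ)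
    refine hd.congr_deriv ?_
    rw [Real.tan_eq_sin_div_cos]
    field_simp
  have hgc : Continuous (fun φ : ℝ => φ/2 - 3*π/4) := by continuity
  have hint : IntervalIntegrable (fun φ => Real.tan (φ/2 - 3*π/4))
      MeasureTheory.volume (3*π/2) (2*π) := by
    apply ContinuousOn.intervalIntegrable
    intro φ hφ
    rw [Set.uIcc_of_le (by linarith)] at hφ
    obtain ⟨h1, h2⟩ := hφ
    have hc : 0 < Real.cos (φ/2 - 3*π/4) :=
      Real.cos_pos_of_mem_Ioo ⟨by linarith, by linarith⟩
    have hct : ContinuousAt (Real.tan ∘ fun φ : ℝ => φ/2 - 3*π/4) φ :=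
      ContinuousAt.comp (Real.continuousAt_tan.2 (ne_of_gt hc)) hgc.continuousAt
    exact hct.continuousWithinAt
  rw [intervalIntegral.integral_eq_sub_of_hasDerivAt key hint]
  have h1 : 2*π/2 - 3*π/4 = π/4 := by ring
  have h2 : 3*π/2/2 - 3*π/4 = 0 := by ring
  rw [h1, h2, Real.cos_pi_div_four, Real.cos_zero, Real.log_one]
  have : Real.log (Real.sqrt 2 / 2) = Real.log 2 / 2 - Real.log 2 := by
    rw [Real.log_div (by positivity) (by norm_num), Real.log_sqrt (by norm_num)]
  rw [this]
  ring

lemma mid_integral (a b k : ℝ) :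
    (∫ φ in a..b, (k + φ)) = k * (b - a) + (b^2 - a^2)/2 := by
  rw [intervalIntegral.integral_add (intervalIntegrable_const)
    intervalIntegral.intervalIntegrable_id, intervalIntegral.integral_const,
    integral_id]
  simp only [smul_eq_mul]
  ring

theorem isbell_type_average_cost (θ : ℝ) (hθ : θ ∈ Set.Ico 0 (π/2)) :
    ((∫ φ in (0:ℝ)..(2*θ), 1 / Real.cos (θ - φ)) +
     (∫ φ in (2*θ)..(3*π/2), (1 / Real.cos θ + Real.tan θ + φ - 2*θ)) +
     (∫ φ in (3*π/2)..(2*π),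
        (1 / Real.cos θ + Real.tan θ + 3*π/2 - 2*θ + Real.tan (φ/2 - 3*π/4))) =
      Real.log ((1 + Real.sin θ) / (1 - Real.sin θ)) + 2*θ^2 - 4*π*θ
        + 2*(π - θ) * Real.tan θ + 2*(π - θ) / Real.cos θ + 15*π^2/8 + Real.log 2) ∧
    (1/(2*π)) *
      ((∫ φ in (0:ℝ)..(2*θ), 1 / Real.cos (θ - φ)) +
       (∫ φ in (2*θ)..(3*π/2), (1 / Real.cos θ + Real.tan θ + φ - 2*θ)) +
       (∫ φ in (3*π/2)..(2*π),
          (1 / Real.cos θ + Real.tan θ + 3*π/2 - 2*θ + Real.tan (φ/2 - 3*π/4)))) =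
    (1/(2*π)) *
      (Real.log ((1 + Real.sin θ) / (1 - Real.sin θ)) + 2*θ^2 - 4*π*θ
        + 2*(π - θ) * Real.tan θ + 2*(π - θ) / Real.cos θ + 15*π^2/8 + Real.log 2) := by
  have hπ := Real.pi_pos
  obtain ⟨hθ0, hθ2⟩ := hθ
  have h1 := sec_integral θ ⟨hθ0, hθ2⟩
  have h2 : (∫ φ in (2*θ)..(3*π/2), (1 / Real.cos θ + Real.tan θ + φ - 2*θ))
      = (1 / Real.cos θ + Real.tan θ - 2*θ) * (3*π/2 - 2*θ)
        + ((3*π/2)^2 - (2*θ)^2)/2 := by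
    have he : (fun φ : ℝ => 1 / Real.cos θ + Real.tan θ + φ - 2*θ)
        = (fun φ : ℝ => (1 / Real.cos θ + Real.tan θ - 2*θ) + φ) := by
      funext φ; ring
    rw [he, mid_integral]
  have hgc : Continuous (fun φ : ℝ => φ/2 - 3*π/4) := by continuity
  have h3 : (∫ φ in (3*π/2)..(2*π),
      (1 / Real.cos θ + Real.tan θ + 3*π/2 - 2*θ + Real.tan (φ/2 - 3*π/4)))
      = (1 / Real.cos θ + Real.tan θ + 3*π/2 - 2*θ) * (2*π - 3*π/2) + Real.log 2 := by
    have hint : IntervalIntegrable (fun φ => Real.tan (φ/2 - 3*π/4))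
        MeasureTheory.volume (3*π/2) (2*π) := by
      apply ContinuousOn.intervalIntegrable
      intro φ hφ
      rw [Set.uIcc_of_le (by linarith)] at hφ
      obtain ⟨ha, hb⟩ := hφ
      have hc : 0 < Real.cos (φ/2 - 3*π/4) :=
        Real.cos_pos_of_mem_Ioo ⟨by linarith, by linarith⟩
      have hct : ContinuousAt (Real.tan ∘ fun φ : ℝ => φ/2 - 3*π/4) φ :=
        ContinuousAt.comp (Real.continuousAt_tan.2 (ne_of_gt hc)) hgc.continuousAt
      exact hct.continuousWithinAt
    rw [intervalIntegral.integral_add intervalIntegrable_const hint,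
      intervalIntegral.integral_const, tan_integral, smul_eq_mul]
    ring
  constructor
  · rw [h1, h2, h3]; ring
  · rw [h1, h2, h3]; ring
end
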